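/- arXiv:1605.07949 — 4 statements merged into one kernel-verified Lean document; each statement's English description precedes it below -/
import Mathlib

section
/- Let F be a field of characteristic p and P = C_{p^m} × C_{p^n} a direct product of two cyclic p-groups. Then the Loewy length of F[P] equals p^m + p^n − 1. -/
open MonoidAlgebra Finset

/-- Sharp bound: `(I ⊔ J) ^ k ≤ I ^ n ⊔ J ^ m` when `n + m ≤ k + 1`. -/
lemma aux_sup_pow {R : Type*} [CommSemiring R] (I J : Ideal R) {n m k : ℕ}
    (h : n + m ≤ k + 1) : (I ⊔ J) ^ k ≤ I ^ n ⊔ J ^ m := by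
  rw [← Ideal.add_eq_sup, ← Ideal.add_eq_sup, add_pow, Ideal.sum_eq_sup]
  apply Finset.sup_le
  intro i hi
  rw [Finset.mem_range] at hi
  by_cases hn : n ≤ i
  · exact Ideal.mul_le_left.trans (Ideal.mul_le_left.trans
      ((Ideal.pow_le_pow_right hn).trans le_sup_left))
  · refine Ideal.mul_le_left.trans (Ideal.mul_le_right.trans
      ((Ideal.pow_le_pow_right ?_).trans le_sup_right))
    omega

lemma aux_expand {F : Type*} [Field F] {H : Type*} [CommGroup H] (u : H) (k : ℕ) :
    (MonoidAlgebra.single u (1 : F) - 1) ^ k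
      = ∑ i ∈ Finset.range (k + 1),
          MonoidAlgebra.single (u ^ i) ((-1 : F) ^ (k - i) * (k.choose i : F)) := by
  rw [sub_eq_add_neg, add_pow]
  refine Finset.sum_congr rfl fun i hi => ?_
  have h1 : (-1 : MonoidAlgebra F H) ^ (k - i)
      = MonoidAlgebra.single 1 ((-1 : F) ^ (k - i)) := by
    rw [MonoidAlgebra.one_def, ← MonoidAlgebra.single_neg, MonoidAlgebra.single_pow, one_pow]
  rw [MonoidAlgebra.single_pow, one_pow, h1, MonoidAlgebra.natCast_def,
    MonoidAlgebra.single_mul_single, MonoidAlgebra.single_mul_single, mul_one, mul_one, one_mul]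


lemma aux_coeff (F : Type*) [Field F] (q r : ℕ) [NeZero q] [NeZero r]
    (hq : 1 ≤ q) (hr : 1 ≤ r) :
    ((MonoidAlgebra.single ((Multiplicative.ofAdd (1 : ZMod q), (1 : Multiplicative (ZMod r))) :
        Multiplicative (ZMod q) × Multiplicative (ZMod r)) (1 : F) - 1) ^ (q - 1) *
      (MonoidAlgebra.single (((1 : Multiplicative (ZMod q)), Multiplicative.ofAdd (1 : ZMod r)) :
        Multiplicative (ZMod q) × Multiplicative (ZMod r)) (1 : F) - 1) ^ (r - 1)).coeff 1
      = (-1 : F) ^ (q - 1 + (r - 1)) := by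
  classical
  have hgpow : ∀ i : ℕ,
      ((Multiplicative.ofAdd (1 : ZMod q), (1 : Multiplicative (ZMod r))) :
        Multiplicative (ZMod q) × Multiplicative (ZMod r)) ^ i
        = (Multiplicative.ofAdd ((i : ZMod q)), 1) := by
    intro i
    rw [Prod.pow_mk, one_pow]
    congr 1
    rw [← ofAdd_nsmul, nsmul_eq_mul, mul_one]
  have hhpow : ∀ j : ℕ,
      (((1 : Multiplicative (ZMod q)), Multiplicative.ofAdd (1 : ZMod r)) :
        Multiplicative (ZMod q) × Multiplicative (ZMod r)) ^ j
        = (1, Multiplicative.ofAdd ((j : ZMod r))) := by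
    intro j
    rw [Prod.pow_mk, one_pow]
    congr 1
    rw [← ofAdd_nsmul, nsmul_eq_mul, mul_one]
  have hone : (1 : Multiplicative (ZMod q) × Multiplicative (ZMod r))
      = (Multiplicative.ofAdd ((0 : ZMod q)), Multiplicative.ofAdd ((0 : ZMod r))) := rfl
  rw [aux_expand, aux_expand, Finset.sum_mul_sum]
  simp_rw [MonoidAlgebra.single_mul_single]
  rw [show q - 1 + 1 = q by omega, show r - 1 + 1 = r by omega]
  simp_rw [MonoidAlgebra.coeff_sum, MonoidAlgebra.coeff_single]
  rw [Finsupp.finset_sum_apply]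
  rw [Finset.sum_eq_single 0 ?_ ?_]
  · rw [Finsupp.finset_sum_apply, Finset.sum_eq_single 0 ?_ ?_]
    · rw [pow_zero, pow_zero, one_mul, Finsupp.single_apply, if_pos rfl]
      simp [pow_add]
    · intro j hj hj0
      rw [Finsupp.single_apply, if_neg]
      intro heq
      apply hj0
      rw [pow_zero, one_mul, hhpow, hone, Prod.mk.injEq] at heq
      have h2 := heq.2
      rw [Multiplicative.ofAdd.apply_eq_iff_eq] at h2
      rw [ZMod.natCast_eq_zero_iff] at h2
      rw [Finset.mem_range] at hj
      exact Nat.eq_zero_of_dvd_of_lt h2 hj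
    · intro habs
      exact absurd (Finset.mem_range.mpr (by omega)) habs
  · intro i hi hi0
    rw [Finsupp.finset_sum_apply]
    apply Finset.sum_eq_zero
    intro j hj
    rw [Finsupp.single_apply, if_neg]
    intro heq
    apply hi0
    rw [hgpow, hhpow, hone, Prod.mk_mul_mk, mul_one, one_mul, Prod.mk.injEq] at heq
    have h1 := heq.1
    rw [Multiplicative.ofAdd.apply_eq_iff_eq] at h1
    rw [ZMod.natCast_eq_zero_iff] at h1
    rw [Finset.mem_range] at hi
    exact Nat.eq_zero_of_dvd_of_lt h1 hi
  · intro habs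
    exact absurd (Finset.mem_range.mpr (by omega)) habs

theorem aux_main (F : Type*) [Field F] (q r : ℕ) [NeZero q] [NeZero r]
    (hq2 : 2 ≤ q) (hr2 : 2 ≤ r)
    (hfq : ∀ x y : MonoidAlgebra F (Multiplicative (ZMod q) × Multiplicative (ZMod r)),
      (x - y) ^ q = x ^ q - y ^ q)
    (hfr : ∀ x y : MonoidAlgebra F (Multiplicative (ZMod q) × Multiplicative (ZMod r)),
      (x - y) ^ r = x ^ r - y ^ r) :
    sInf {k : ℕ | (Ideal.jacobson (⊥ : Ideal (MonoidAlgebra F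
        (Multiplicative (ZMod q) × Multiplicative (ZMod r))))) ^ k = ⊥}
      = q + r - 1 := by
  classical
  set G := Multiplicative (ZMod q) × Multiplicative (ZMod r) with hGdef
  set R := MonoidAlgebra F G with hRdef
  set g : G := (Multiplicative.ofAdd (1 : ZMod q), 1) with hgdef
  set h : G := (1, Multiplicative.ofAdd (1 : ZMod r)) with hhdef
  -- powers of g and h
  have hgpow : ∀ i : ℕ, g ^ i = (Multiplicative.ofAdd ((i : ZMod q)), 1) := by
    intro i
    rw [hgdef, Prod.pow_mk, one_pow]
    congr 1
    rw [← ofAdd_nsmul, nsmul_eq_mul, mul_one]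
  have hhpow : ∀ j : ℕ, h ^ j = (1, Multiplicative.ofAdd ((j : ZMod r))) := by
    intro j
    rw [hhdef, Prod.pow_mk, one_pow]
    congr 1
    rw [← ofAdd_nsmul, nsmul_eq_mul, mul_one]
  set a : R := MonoidAlgebra.single g 1 - 1 with hadef
  set b : R := MonoidAlgebra.single h 1 - 1 with hbdef
  have hgq : g ^ q = 1 := by
    rw [hgpow, ZMod.natCast_self]
    rfl
  have hhq : h ^ r = 1 := by
    rw [hhpow, ZMod.natCast_self]
    rfl
  have haq : a ^ q = 0 := by
    rw [hadef, hfq, MonoidAlgebra.single_pow, one_pow, one_pow, hgq,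
      ← MonoidAlgebra.one_def, sub_self]
  have hbr : b ^ r = 0 := by
    rw [hbdef, hfr, MonoidAlgebra.single_pow, one_pow, one_pow, hhq,
      ← MonoidAlgebra.one_def, sub_self]
  set I : Ideal R := Ideal.span {a, b} with hIdef
  have haI : a ∈ I := Ideal.subset_span (Set.mem_insert _ _)
  have hbI : b ∈ I := Ideal.subset_span (Set.mem_insert_of_mem _ rfl)
  -- I ^ (q + r - 1) = ⊥
  have hIK : I ^ (q + r - 1) = ⊥ := by
    have hsplit : I = Ideal.span {a} ⊔ Ideal.span {b} := by
      rw [hIdef, Ideal.span_insert]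
    have hle : I ^ (q + r - 1) ≤ Ideal.span {a} ^ q ⊔ Ideal.span {b} ^ r := by
      rw [hsplit]
      exact aux_sup_pow _ _ (by omega)
    rw [Ideal.span_singleton_pow, Ideal.span_singleton_pow, haq, hbr,
      Ideal.span_singleton_eq_bot.mpr rfl, sup_idem] at hle
    exact le_bot_iff.mp hle
  -- the witness element
  set c : R := a ^ (q - 1) * b ^ (r - 1) with hcdef
  have hcmem : c ∈ I ^ (q + r - 2) := by
    have h1 : a ^ (q - 1) ∈ I ^ (q - 1) := Ideal.pow_mem_pow haI _
    have h2 : b ^ (r - 1) ∈ I ^ (r - 1) := Ideal.pow_mem_pow hbI _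
    have := Ideal.mul_mem_mul h1 h2
    rwa [← pow_add, show q - 1 + (r - 1) = q + r - 2 by omega] at this
  -- c ≠ 0 by computing its coefficient at 1
  have hone : (1 : G) = (Multiplicative.ofAdd ((0 : ZMod q)), Multiplicative.ofAdd ((0 : ZMod r))) := by
    rfl
  have hcoeff : c.coeff 1 = (-1 : F) ^ (q - 1 + (r - 1)) := by
    rw [hcdef, hadef, hbdef, hgdef, hhdef]
    exact aux_coeff F q r (by omega) (by omega)
  have hcne : c ≠ 0 := by
    intro h0
    have : (c : MonoidAlgebra F G).coeff 1 = 0 := by rw [h0]; rfl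
    rw [hcoeff] at this
    exact pow_ne_zero _ (neg_ne_zero.mpr (one_ne_zero (α := F))) this
  have hne : I ^ (q + r - 2) ≠ ⊥ := by
    intro hbot
    rw [hbot] at hcmem
    exact hcne (Ideal.mem_bot.mp hcmem)
  -- augmentation map
  set ε : MonoidAlgebra F G →ₐ[F] F := MonoidAlgebra.lift F F G 1 with hεdef
  have hεsingle : ∀ (x : G) (cc : F), ε (MonoidAlgebra.single x cc) = cc := by
    intro x cc
    rw [hεdef, MonoidAlgebra.lift_single]
    simp
  have hεsurj : Function.Surjective ε := fun cc =>
    ⟨MonoidAlgebra.single 1 cc, hεsingle 1 cc⟩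
  -- membership lemmas for I
  have hpowmem : ∀ x : G, MonoidAlgebra.single x (1 : F) - 1 ∈ I →
      ∀ i : ℕ, MonoidAlgebra.single (x ^ i) (1 : F) - 1 ∈ I := by
    intro x hx i
    induction i with
    | zero =>
      rw [pow_zero, ← MonoidAlgebra.one_def, sub_self]
      exact I.zero_mem
    | succ i ih =>
      have key : MonoidAlgebra.single (x ^ (i + 1)) (1 : F) - 1
          = MonoidAlgebra.single (x ^ i) (1 : F) * (MonoidAlgebra.single x 1 - 1)
            + (MonoidAlgebra.single (x ^ i) (1 : F) - 1) := by
        rw [mul_sub, MonoidAlgebra.single_mul_single, mul_one, mul_one, ← pow_succ]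
        ring
      rw [key]
      exact I.add_mem (I.mul_mem_left _ hx) ih
  have hallmem : ∀ x : G, MonoidAlgebra.single x (1 : F) - 1 ∈ I := by
    rintro ⟨u, v⟩
    have hu : ((u, 1) : G) = g ^ ((Multiplicative.toAdd u).val) := by
      rw [hgpow, ZMod.natCast_rightInverse _]
      rfl
    have hv : ((1, v) : G) = h ^ ((Multiplicative.toAdd v).val) := by
      rw [hhpow, ZMod.natCast_rightInverse _]
      rfl
    have hsplit : ((u, v) : G) = (u, 1) * (1, v) := by
      rw [Prod.mk_mul_mk, mul_one, one_mul]
    have key : MonoidAlgebra.single ((u, v) : G) (1 : F) - 1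
        = MonoidAlgebra.single ((u, 1) : G) (1 : F)
            * (MonoidAlgebra.single ((1, v) : G) (1 : F) - 1)
          + (MonoidAlgebra.single ((u, 1) : G) (1 : F) - 1) := by
      rw [mul_sub, MonoidAlgebra.single_mul_single, mul_one, mul_one, ← hsplit]
      ring
    rw [key]
    exact I.add_mem
      (I.mul_mem_left _ (hv ▸ hpowmem h hbI _))
      (hu ▸ hpowmem g haI _)
  have hclose : ∀ f : R, f - algebraMap F R (ε f) ∈ I := by
    intro f
    induction f using MonoidAlgebra.induction_on with
    | of x =>
      have hof : (MonoidAlgebra.of F G x : R) = MonoidAlgebra.single x 1 := rfl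
      rw [hof, hεsingle, map_one]
      exact hallmem x
    | add f1 f2 h1 h2 =>
      have key : (f1 + f2) - algebraMap F R (ε (f1 + f2))
          = (f1 - algebraMap F R (ε f1)) + (f2 - algebraMap F R (ε f2)) := by
        rw [map_add, map_add]
        ring
      rw [key]
      exact I.add_mem h1 h2
    | smul cc f hf =>
      have key : (cc • f) - algebraMap F R (ε (cc • f))
          = algebraMap F R cc * (f - algebraMap F R (ε f)) := by
        rw [map_smul, smul_eq_mul, map_mul, Algebra.smul_def, mul_sub]
      rw [key]
      exact I.mul_mem_left _ hf
  have hker : RingHom.ker ε = I := by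
    apply le_antisymm
    · intro f hf
      rw [RingHom.mem_ker] at hf
      have := hclose f
      rwa [hf, map_zero, sub_zero] at this
    · rw [hIdef, Ideal.span_le]
      rintro x (rfl | rfl)
      · rw [SetLike.mem_coe, RingHom.mem_ker, hadef, map_sub, map_one, hεsingle, sub_self]
      · rw [SetLike.mem_coe, RingHom.mem_ker, hbdef, map_sub, map_one, hεsingle, sub_self]
  have hmax : I.IsMaximal := hker ▸ RingHom.ker_isMaximal_of_surjective ε hεsurj
  -- jacobson ⊥ = I
  have hJ : Ideal.jacobson (⊥ : Ideal R) = I := by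
    apply le_antisymm
    · exact sInf_le ⟨bot_le, hmax⟩
    · rw [hIdef, Ideal.span_le]
      rintro x (rfl | rfl)
      · exact Ideal.radical_le_jacobson ⟨q, by rw [haq]; exact (⊥ : Ideal R).zero_mem⟩
      · exact Ideal.radical_le_jacobson ⟨r, by rw [hbr]; exact (⊥ : Ideal R).zero_mem⟩
  -- final computation of sInf
  have hset : {k : ℕ | (Ideal.jacobson (⊥ : Ideal R)) ^ k = ⊥} = {k : ℕ | I ^ k = ⊥} := by
    rw [hJ]
  rw [hset]
  have hmem : (q + r - 1) ∈ {k : ℕ | I ^ k = ⊥} := hIK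
  apply le_antisymm
  · exact Nat.sInf_le hmem
  · by_contra hlt
    push_neg at hlt
    have hsmem : I ^ (sInf {k : ℕ | I ^ k = ⊥}) = ⊥ := Nat.sInf_mem ⟨_, hmem⟩
    have : I ^ (q + r - 2) ≤ I ^ (sInf {k : ℕ | I ^ k = ⊥}) :=
      Ideal.pow_le_pow_right (by omega)
    rw [hsmem] at this
    exact hne (le_bot_iff.mp this)

theorem stmt7 (F : Type*) [Field F] (p m n : ℕ) [Fact p.Prime] [CharP F p]
    (hm : 1 ≤ m) (hn : 1 ≤ n) :
    sInf {k : ℕ | (Ideal.jacobson (⊥ : Ideal (MonoidAlgebra F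
        (Multiplicative (ZMod (p ^ m)) × Multiplicative (ZMod (p ^ n)))))) ^ k = ⊥}
      = p ^ m + p ^ n - 1 := by
  have hp : p.Prime := Fact.out
  have hq2 : 2 ≤ p ^ m := by
    calc 2 ≤ p := hp.two_le
    _ = p ^ 1 := (pow_one p).symm
    _ ≤ p ^ m := Nat.pow_le_pow_right hp.pos hm
  have hr2 : 2 ≤ p ^ n := by
    calc 2 ≤ p := hp.two_le
    _ = p ^ 1 := (pow_one p).symm
    _ ≤ p ^ n := Nat.pow_le_pow_right hp.pos hn
  haveI : NeZero (p ^ m) := ⟨by omega⟩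
  haveI : NeZero (p ^ n) := ⟨by omega⟩
  haveI : CharP (MonoidAlgebra F
      (Multiplicative (ZMod (p ^ m)) × Multiplicative (ZMod (p ^ n)))) p :=
    charP_of_injective_algebraMap' F p
  exact aux_main F (p ^ m) (p ^ n) hq2 hr2
    (fun x y => sub_pow_char_pow x y m) (fun x y => sub_pow_char_pow x y n)
end

section
/- Let D = C_{2^m} × C_{2^n} with m > n ≥ 1. Then the order of the automorphism group of D equals 2^{m + 3n − 2}. -/
open Function

section aux

lemma zmodprod_decomp {M N : ℕ} [NeZero M] [NeZero N] (p : ZMod M × ZMod N) :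
    p = p.1.val • ((1 : ZMod M), (0 : ZMod N)) + p.2.val • ((0 : ZMod M), (1 : ZMod N)) := by
  simp [Prod.ext_iff, nsmul_eq_mul, ZMod.natCast_val, ZMod.cast_id]

/-- Extensionality for additive homs out of `ZMod M × ZMod N`. -/
lemma zmodprod_hom_ext {M N : ℕ} [NeZero M] [NeZero N] {H : Type*} [AddCommGroup H]
    (f g : ZMod M × ZMod N →+ H) (h1 : f (1, 0) = g (1, 0)) (h2 : f (0, 1) = g (0, 1)) :
    f = g := by
  ext ⟨u, v⟩
  rw [zmodprod_decomp ((u, v) : ZMod M × ZMod N)]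
  simp only [map_add, map_nsmul, h1, h2]

variable {M N : ℕ}

/-- The injection `ZMod N →+ ZMod M` (for `N ∣ M`), sending `1` to `M/N`. -/
noncomputable def iota (h : N ∣ M) : ZMod N →+ ZMod M :=
  ZMod.lift N ⟨(zmultiplesHom (ZMod M)) ((M / N : ℕ) : ZMod M), by
    simp only [zmultiplesHom_apply, natCast_zsmul, nsmul_eq_mul]
    rw [← Nat.cast_mul, Nat.mul_div_cancel' h, ZMod.natCast_self]⟩

lemma iota_one (h : N ∣ M) : iota h 1 = ((M / N : ℕ) : ZMod M) := by
  have h1 : (1 : ZMod N) = ((1 : ℤ) : ZMod N) := by push_cast; ring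
  rw [h1, iota, ZMod.lift_coe]
  simp

lemma iota_apply (h : N ∣ M) [NeZero N] (x : ZMod N) :
    iota h x = ((x.val * (M / N) : ℕ) : ZMod M) := by
  conv_lhs => rw [show x = x.val • (1 : ZMod N) by
    simp [nsmul_eq_mul, ZMod.natCast_val, ZMod.cast_id]]
  rw [map_nsmul, iota_one, nsmul_eq_mul, Nat.cast_mul]

lemma iota_injective (h : N ∣ M) [NeZero M] [NeZero N] : Function.Injective (iota h) := by
  have hq : M / N ≠ 0 := by
    intro h0
    have := Nat.div_mul_cancel h
    rw [h0, zero_mul] at this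
    exact NeZero.ne M this.symm
  rw [injective_iff_map_eq_zero]
  intro x hx
  rw [iota_apply, ZMod.natCast_eq_zero_iff] at hx
  have hM : M = N * (M / N) := (Nat.mul_div_cancel' h).symm
  have hx' : (M / N) * N ∣ (M / N) * x.val := by
    rw [mul_comm (M/N) N, ← hM, mul_comm (M/N) x.val]
    exact hx
  have hNx : N ∣ x.val := (mul_dvd_mul_iff_left hq).mp hx'
  have h0 : x.val = 0 := Nat.eq_zero_of_dvd_of_lt hNx (ZMod.val_lt x)
  have hxx : ((x.val : ℕ) : ZMod N) = x := by rw [ZMod.natCast_val, ZMod.cast_id]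
  rw [← hxx, h0, Nat.cast_zero]

lemma iota_surj_on (h : N ∣ M) [NeZero M] [NeZero N] (y : ZMod M) (hy : N • y = 0) :
    ∃ x, iota h x = y := by
  have hq : 0 < M / N := Nat.div_pos (Nat.le_of_dvd (Nat.pos_of_ne_zero (NeZero.ne M)) h)
    (Nat.pos_of_ne_zero (NeZero.ne N))
  have hyv : ((N * y.val : ℕ) : ZMod M) = 0 := by
    push_cast
    rw [ZMod.natCast_val, ZMod.cast_id, ← nsmul_eq_mul]
    exact hy
  rw [ZMod.natCast_eq_zero_iff] at hyv
  have hM : M = N * (M / N) := (Nat.mul_div_cancel' h).symm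
  have hdvd : (M / N) ∣ y.val := by
    rcases hyv with ⟨k, hk⟩
    refine ⟨k, Nat.eq_of_mul_eq_mul_left (Nat.pos_of_ne_zero (NeZero.ne N)) ?_⟩
    rw [hk]
    conv_lhs => rw [hM]
    ring
  rcases hdvd with ⟨t, ht⟩
  have htlt : t < N := by
    have hlt : (M / N) * t < N * (M / N) := by rw [← ht, ← hM]; exact ZMod.val_lt y
    by_contra hc
    push_neg at hc
    have : N * (M / N) ≤ (M / N) * t := by
      calc N * (M/N) ≤ t * (M/N) := Nat.mul_le_mul_right _ hc
        _ = (M/N) * t := by ring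
    omega
  refine ⟨(t : ZMod N), ?_⟩
  rw [iota_apply, ZMod.val_natCast_of_lt htlt]
  rw [show t * (M / N) = y.val by rw [ht]; ring]
  rw [ZMod.natCast_val, ZMod.cast_id]

end aux

section main

variable {m n : ℕ}

/-- `iota (π u * t) = u * iota t`. -/
lemma iota_pi_mul {M N : ℕ} (h : N ∣ M) [NeZero M] [NeZero N] (u : ZMod M) (t : ZMod N) :
    iota h ((ZMod.castHom h (ZMod N)) u * t) = u * iota h t := by
  have hu : ((u.val : ℕ) : ZMod M) = u := by rw [ZMod.natCast_val, ZMod.cast_id]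
  have hπ : (ZMod.castHom h (ZMod N)) u = ((u.val : ℕ) : ZMod N) := by
    rw [ZMod.castHom_apply, ← ZMod.natCast_val]
  rw [hπ, ← nsmul_eq_mul, map_nsmul, nsmul_eq_mul, hu]

lemma iota_even (h : N ∣ M) [NeZero N] (h2 : 2 ∣ M / N) (t : ZMod N) :
    ∃ z : ZMod M, iota h t = 2 * z := by
  rcases h2 with ⟨q, hq⟩
  exact ⟨((t.val * q : ℕ) : ZMod M), by rw [iota_apply, hq]; push_cast; ring⟩

/-- In `ZMod (2^m)`, an element is a unit iff its image in `ZMod 2` is. -/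
lemma zmod_isUnit_iff (hm : 1 ≤ m) (x : ZMod (2 ^ m)) :
    IsUnit x ↔ IsUnit ((ZMod.castHom (dvd_pow_self 2 (by omega : m ≠ 0)) (ZMod 2)) x) := by
  haveI : NeZero (2 ^ m) := ⟨pow_ne_zero m two_ne_zero⟩
  set χ := ZMod.castHom (dvd_pow_self 2 (by omega : m ≠ 0)) (ZMod 2) with hχ
  constructor
  · exact fun h => h.map χ
  · intro h
    have h1 : χ x = 1 := by
      have : ∀ y : ZMod 2, IsUnit y → y = 1 := by decide
      exact this _ h
    have h0 : χ (x - 1) = 0 := by rw [map_sub, h1, map_one, sub_self]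
    have heven : 2 ∣ (x - 1).val := by
      have : ((x - 1).val : ZMod 2) = 0 := by
        rw [ZMod.natCast_val]
        rw [← ZMod.castHom_apply (h := dvd_pow_self 2 (by omega : m ≠ 0))]
        exact h0
      rwa [ZMod.natCast_eq_zero_iff] at this
    rcases heven with ⟨w, hw⟩
    have hx1 : x = 1 + 2 * ((w : ℕ) : ZMod (2 ^ m)) := by
      have hv : (((x - 1).val : ℕ) : ZMod (2 ^ m)) = x - 1 := by
        rw [ZMod.natCast_val, ZMod.cast_id]
      have hd : x - 1 = 2 * ((w : ℕ) : ZMod (2 ^ m)) := by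
        rw [← hv, hw]; push_cast; ring
      linear_combination hd
    rw [hx1]
    apply IsNilpotent.isUnit_one_add
    refine ⟨m, ?_⟩
    rw [mul_pow, show ((2 : ZMod (2^m)))^m = ((2^m : ℕ) : ZMod (2^m)) by push_cast; ring,
      ZMod.natCast_self, zero_mul]

lemma zmod_isUnit_sub_even (hm : 1 ≤ m) (a : ZMod (2 ^ m)) (ha : IsUnit a) (z : ZMod (2 ^ m)) :
    IsUnit (a - 2 * z) := by
  rw [zmod_isUnit_iff hm] at *
  rw [map_sub, map_mul]
  have h2 : (ZMod.castHom (dvd_pow_self 2 (by omega : m ≠ 0)) (ZMod 2)) (2 : ZMod (2^m)) = 0 := by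
    have hc : ((2 : ℕ) : ZMod (2^m)) = (2 : ZMod (2^m)) := by push_cast; ring
    rw [← hc, map_natCast]
    decide
  rw [h2, zero_mul, sub_zero]
  exact ha

end main

section core

variable {m n : ℕ}

/-- The endomorphism of `ZMod (2^m) × ZMod (2^n)` with "matrix" `(a, b, c, d)`. -/
noncomputable def psiHom (hNM : (2:ℕ)^n ∣ 2^m) (a : ZMod (2^m)) (b c d : ZMod (2^n)) :
    (ZMod (2^m) × ZMod (2^n)) →+ (ZMod (2^m) × ZMod (2^n)) :=
  AddMonoidHom.mk' (fun p => (a * p.1 + iota hNM (p.2 * b),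
    (ZMod.castHom hNM (ZMod (2^n))) p.1 * c + p.2 * d))
    (by
      intro p q
      simp only [Prod.fst_add, Prod.snd_add, mul_add, add_mul, map_add, Prod.mk_add_mk,
        Prod.mk.injEq]
      constructor <;> ring)

lemma psiHom_apply (hNM : (2:ℕ)^n ∣ 2^m) (a : ZMod (2^m)) (b c d : ZMod (2^n)) (p) :
    psiHom hNM a b c d p = (a * p.1 + iota hNM (p.2 * b),
      (ZMod.castHom hNM (ZMod (2^n))) p.1 * c + p.2 * d) := rfl

lemma psiHom_e1 (hNM : (2:ℕ)^n ∣ 2^m) (a : ZMod (2^m)) (b c d : ZMod (2^n)) :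
    psiHom hNM a b c d (1, 0) = (a, c) := by
  rw [psiHom_apply]
  rw [mul_one, zero_mul, map_zero, add_zero, map_one, one_mul, zero_mul, add_zero]

lemma psiHom_e2 (hNM : (2:ℕ)^n ∣ 2^m) (a : ZMod (2^m)) (b c d : ZMod (2^n)) :
    psiHom hNM a b c d (0, 1) = (iota hNM b, d) := by
  rw [psiHom_apply]
  rw [mul_zero, one_mul, zero_add, map_zero, zero_mul, zero_add, one_mul]

lemma psiHom_injective (hmn : m > n) (hn : 1 ≤ n)
    (a : (ZMod (2^m))ˣ) (b c : ZMod (2^n)) (d : (ZMod (2^n))ˣ) :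
    Function.Injective (psiHom (pow_dvd_pow 2 (le_of_lt hmn)) (↑a) b c (↑d)) := by
  haveI : NeZero ((2:ℕ)^m) := ⟨pow_ne_zero m two_ne_zero⟩
  haveI : NeZero ((2:ℕ)^n) := ⟨pow_ne_zero n two_ne_zero⟩
  set hNM : (2:ℕ)^n ∣ 2^m := pow_dvd_pow 2 (le_of_lt hmn)
  have h2div : 2 ∣ 2^m / 2^n := by
    rw [Nat.pow_div (le_of_lt hmn) (by norm_num)]
    exact dvd_pow_self 2 (by omega)
  rw [injective_iff_map_eq_zero]
  rintro ⟨u, v⟩ hp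
  rw [psiHom_apply, Prod.ext_iff] at hp
  obtain ⟨e1, e2⟩ := hp
  simp only [Prod.fst_zero, Prod.snd_zero] at e1 e2
  set π := ZMod.castHom hNM (ZMod (2^n))
  have hv : v = -(π u * c) * ↑d⁻¹ := by
    have hvd : v * ↑d = -(π u * c) := by linear_combination e2
    calc v = v * (↑d * ↑d⁻¹) := by rw [Units.mul_inv, mul_one]
      _ = (v * ↑d) * ↑d⁻¹ := by ring
      _ = -(π u * c) * ↑d⁻¹ := by rw [hvd]
  obtain ⟨z, hz⟩ := iota_even hNM h2div (-(c * ↑d⁻¹ * b))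
  have e1' : (↑a - 2 * (-z)) * u = 0 := by
    have harg : v * b = π u * -(c * ↑d⁻¹ * b) := by rw [hv]; ring
    rw [harg, iota_pi_mul, hz] at e1
    linear_combination e1
  have hu : u = 0 :=
    ((zmod_isUnit_sub_even (by omega) ↑a a.isUnit (-z)).mul_right_eq_zero).mp e1'
  have hv0 : v = 0 := by rw [hv, hu, map_zero, zero_mul, neg_zero, zero_mul]
  rw [hu, hv0]
  rfl

end core

theorem card_addAut_pow2 (m n : ℕ) (hmn : m > n) (hn : 1 ≤ n) :
    Nat.card (AddAut (ZMod (2 ^ m) × ZMod (2 ^ n))) = 2 ^ (m + 3 * n - 2) := by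
  haveI : NeZero ((2:ℕ)^m) := ⟨pow_ne_zero m two_ne_zero⟩
  haveI : NeZero ((2:ℕ)^n) := ⟨pow_ne_zero n two_ne_zero⟩
  have hm : 1 ≤ m := by omega
  set hNM : (2:ℕ)^n ∣ 2^m := pow_dvd_pow 2 (le_of_lt hmn) with hNMdef
  have h2div : 2 ∣ 2^m / 2^n := by
    rw [Nat.pow_div (le_of_lt hmn) (by norm_num)]
    exact dvd_pow_self 2 (by omega)
  set T := (ZMod (2^m))ˣ × ZMod (2^n) × ZMod (2^n) × (ZMod (2^n))ˣ with hT
  set Ψ : T → AddAut (ZMod (2 ^ m) × ZMod (2 ^ n)) := fun q =>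
    AddEquiv.ofBijective (psiHom hNM (↑q.1) q.2.1 q.2.2.1 (↑q.2.2.2))
      (Finite.injective_iff_bijective.mp (psiHom_injective hmn hn q.1 q.2.1 q.2.2.1 q.2.2.2))
    with hΨ
  have hΨapp : ∀ q p, Ψ q p = psiHom hNM (↑q.1) q.2.1 q.2.2.1 (↑q.2.2.2) p := fun q p => rfl
  have hinj : Function.Injective Ψ := by
    rintro ⟨a, b, c, d⟩ ⟨a', b', c', d'⟩ hq
    have h1 : ((↑a : ZMod (2^m)), c) = ((↑a' : ZMod (2^m)), c') := by
      rw [← psiHom_e1 hNM (↑a) b c (↑d), ← psiHom_e1 hNM (↑a') b' c' (↑d'),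
        ← hΨapp ⟨a,b,c,d⟩, ← hΨapp ⟨a',b',c',d'⟩, hq]
    have h2 : (iota hNM b, (↑d : ZMod (2^n))) = (iota hNM b', (↑d' : ZMod (2^n))) := by
      rw [← psiHom_e2 hNM (↑a) b c (↑d), ← psiHom_e2 hNM (↑a') b' c' (↑d'),
        ← hΨapp ⟨a,b,c,d⟩, ← hΨapp ⟨a',b',c',d'⟩, hq]
    rw [Prod.ext_iff] at h1 h2
    have hb : b = b' := iota_injective hNM h2.1
    exact Prod.ext (Units.ext h1.1) (Prod.ext hb (Prod.ext h1.2 (Units.ext h2.2)))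
  have hsurj : Function.Surjective Ψ := by
    intro F
    set x := F (1, 0) with hx
    set y := F (0, 1) with hy
    -- y is 2^n-torsion
    have hNy : (2^n : ℕ) • y = 0 := by
      rw [hy, ← map_nsmul, show (2^n : ℕ) • ((0 : ZMod (2^m)), (1 : ZMod (2^n))) = 0 by
        simp [Prod.ext_iff, nsmul_eq_mul, ZMod.natCast_self], map_zero]
    obtain ⟨b, hb⟩ := iota_surj_on hNM y.1 (by
      have := congrArg Prod.fst hNy
      simpa using this)
    -- the mod-2 reduction maps
    set χ := ZMod.castHom (dvd_pow_self 2 (by omega : m ≠ 0)) (ZMod 2) with hχdef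
    set χ' := ZMod.castHom (dvd_pow_self 2 (by omega : n ≠ 0)) (ZMod 2) with hχ'def
    have hχ2 : ∀ w : ZMod (2^m), χ (2 * w) = 0 := by
      intro w
      have hc : ((2 : ℕ) : ZMod (2^m)) = (2 : ZMod (2^m)) := by push_cast; ring
      rw [map_mul, ← hc, map_natCast, show ((2:ℕ) : ZMod 2) = 0 by decide, zero_mul]
    have hF : ∀ p : ZMod (2^m) × ZMod (2^n), F p = p.1.val • x + p.2.val • y := by
      intro p
      conv_lhs => rw [zmodprod_decomp p]
      rw [map_add, map_nsmul, map_nsmul, ← hx, ← hy]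
    obtain ⟨z, hz⟩ := iota_even hNM h2div b
    have hy1 : y.1 = 2 * z := by rw [← hb, hz]
    -- x.1 is a unit
    obtain ⟨p, hp⟩ := F.surjective (1, 0)
    have hp1 : (p.1.val : ZMod (2^m)) * x.1 + (p.2.val : ZMod (2^m)) * y.1 = 1 := by
      have := congrArg Prod.fst (hF p ▸ hp : p.1.val • x + p.2.val • y = (1, 0))
      simpa [nsmul_eq_mul] using this
    have hax : IsUnit x.1 := by
      rw [zmod_isUnit_iff hm]
      apply IsUnit.of_mul_eq_one ((p.1.val : ZMod 2))
      have hc := congrArg χ hp1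
      rw [map_add, map_mul, map_mul, map_one, map_natCast, map_natCast, hy1,
        hχ2 z, mul_zero, add_zero, mul_comm] at hc
      exact hc
    -- y.2 is a unit
    obtain ⟨q, hq⟩ := F.surjective (0, 1)
    have hq1 : (q.1.val : ZMod (2^m)) * x.1 + (q.2.val : ZMod (2^m)) * y.1 = 0 := by
      have := congrArg Prod.fst (hF q ▸ hq : q.1.val • x + q.2.val • y = (0, 1))
      simpa [nsmul_eq_mul] using this
    have hq2 : (q.1.val : ZMod (2^n)) * x.2 + (q.2.val : ZMod (2^n)) * y.2 = 1 := by
      have := congrArg Prod.snd (hF q ▸ hq : q.1.val • x + q.2.val • y = (0, 1))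
      simpa [nsmul_eq_mul] using this
    have hq10 : ((q.1.val : ℕ) : ZMod 2) = 0 := by
      have hc := congrArg χ hq1
      rw [map_add, map_mul, map_mul, map_zero, map_natCast, map_natCast, hy1,
        hχ2 z, mul_zero, add_zero] at hc
      have hux : IsUnit (χ x.1) := (zmod_isUnit_iff hm x.1).mp hax
      exact (hux.mul_left_eq_zero).mp hc
    have hdy : IsUnit y.2 := by
      rw [zmod_isUnit_iff hn]
      apply IsUnit.of_mul_eq_one ((q.2.val : ZMod 2))
      have hc := congrArg χ' hq2
      rw [map_add, map_mul, map_mul, map_one, map_natCast, map_natCast,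
        hq10, zero_mul, zero_add, mul_comm] at hc
      exact hc
    -- now exhibit the preimage
    refine ⟨⟨hax.unit, b, x.2, hdy.unit⟩, ?_⟩
    have hhom := zmodprod_hom_ext
      (Ψ ⟨hax.unit, b, x.2, hdy.unit⟩ : ZMod (2^m) × ZMod (2^n) ≃+ _).toAddMonoidHom
      F.toAddMonoidHom ?_ ?_
    · exact AddEquiv.ext fun p => DFunLike.congr_fun hhom p
    · show Ψ _ (1, 0) = F (1, 0)
      rw [hΨapp, psiHom_e1, ← hx]
      exact Prod.ext rfl rfl
    · show Ψ _ (0, 1) = F (0, 1)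
      rw [hΨapp, psiHom_e2, ← hy]
      exact Prod.ext (by rw [IsUnit.unit_spec, hb]) rfl
  -- count
  rw [← Nat.card_eq_of_bijective Ψ ⟨hinj, hsurj⟩, hT]
  rw [Nat.card_prod, Nat.card_prod, Nat.card_prod, Nat.card_zmod]
  have hu1 : Nat.card (ZMod (2^m))ˣ = 2 ^ (m - 1) := by
    rw [Nat.card_eq_fintype_card, ZMod.card_units_eq_totient,
      Nat.totient_prime_pow Nat.prime_two (by omega)]
    norm_num
  have hu2 : Nat.card (ZMod (2^n))ˣ = 2 ^ (n - 1) := by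
    rw [Nat.card_eq_fintype_card, ZMod.card_units_eq_totient,
      Nat.totient_prime_pow Nat.prime_two (by omega)]
    norm_num
  rw [hu1, hu2, ← pow_add, ← pow_add, ← pow_add]
  congr 1
  omega

theorem stmt9 (m n : ℕ) (hmn : m > n) (hn : 1 ≤ n) :
    Nat.card (MulAut (Multiplicative (ZMod (2 ^ m)) × Multiplicative (ZMod (2 ^ n))))
      = 2 ^ (m + 3 * n - 2) := by
  have e : Multiplicative (ZMod (2 ^ m)) × Multiplicative (ZMod (2 ^ n)) ≃*
      Multiplicative (ZMod (2 ^ m) × ZMod (2 ^ n)) :=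
    (MulEquiv.prodMultiplicative (ZMod (2 ^ m)) (ZMod (2 ^ n))).symm
  have e2 : MulAut (Multiplicative (ZMod (2 ^ m)) × Multiplicative (ZMod (2 ^ n))) ≃
      AddAut (ZMod (2 ^ m) × ZMod (2 ^ n)) :=
    (MulAut.congr e).toEquiv.trans AddEquiv.toMultiplicative.symm
  rw [Nat.card_congr e2]
  exact card_addAut_pow2 m n hmn hn
end

section
/- Let F be a field of characteristic p, G a finite group, and x ∈ G. Let σ_x : Z(F[G]) → F[C_G(x)] denote the Brauer map sending a central element a = Σ_g a_g g to its truncation Σ_{g ∈ C_G(x)} a_g g. Then σ_x is an F-algebra homomorphism from the center of F[G] to the center of F[C_G(x)], provided x has p-power order. -/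
open MulAction Finset

/-- Sum over a finite set with an action of a `p`-group of an invariant function
vanishing on fixed points is zero in characteristic `p`. -/
lemma pgroup_sum_eq_zero {F : Type*} [Field F] {p : ℕ} [Fact p.Prime] [CharP F p]
    {P : Type*} [Group P] [Finite P] {X : Type*} [Fintype X] [MulAction P X]
    (hP : IsPGroup p P) (f : X → F)
    (hf : ∀ (g : P) (u : X), f (g • u) = f u)
    (h0 : ∀ u ∈ fixedPoints P X, f u = 0) :
    ∑ u, f u = 0 := by
  classical
  rw [← Finset.sum_fiberwise (univ : Finset X) (Quotient.mk (orbitRel P X)) f]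
  refine Finset.sum_eq_zero fun ω _ => ?_
  induction ω using Quotient.inductionOn with
  | h v =>
    have hmem : (univ.filter fun u => Quotient.mk (orbitRel P X) u
        = Quotient.mk (orbitRel P X) v) = (orbit P v).toFinset := by
      ext u
      simp [Quotient.eq, orbitRel_apply]
    have hconst : ∀ u ∈ (orbit P v).toFinset, f u = f v := by
      intro u hu
      rw [Set.mem_toFinset] at hu
      obtain ⟨g, rfl⟩ := hu
      exact hf g v
    rw [hmem, Finset.sum_congr rfl hconst, Finset.sum_const]
    by_cases hv : v ∈ fixedPoints P X
    · rw [h0 v hv, smul_zero]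
    · obtain ⟨n, hn⟩ := hP.card_orbit v
      rw [Nat.card_eq_fintype_card, ← Set.toFinset_card] at hn
      rw [hn]
      rcases n with _ | n
      · exfalso
        apply hv
        rw [mem_fixedPoints_iff_card_orbit_eq_one, ← Set.toFinset_card, hn, pow_zero]
      · have : ((p ^ (n + 1) : ℕ) : F) = 0 := by
          rw [Nat.cast_pow, CharP.cast_eq_zero F p, zero_pow (Nat.succ_ne_zero n)]
        rw [nsmul_eq_mul, this, zero_mul]

/-- The Brauer map `σ_x`, i.e. the truncation `T` of coefficients to the
centralizer of `x`, is an `F`-algebra homomorphism from the center of `F[G]`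
to the center of `F[C_G(x)]` when `x` has `p`-power order. -/
theorem stmt15 (F : Type*) [Field F] (p : ℕ) [Fact p.Prime] [CharP F p]
    (G : Type*) [Group G] [Fintype G] (x : G) (hx : ∃ k : ℕ, orderOf x = p ^ k)
    (T : MonoidAlgebra F G → MonoidAlgebra F (Subgroup.centralizer {x}))
    (hT : ∀ (a : MonoidAlgebra F G) (g : Subgroup.centralizer ({x} : Set G)),
      (T a).coeff g = a.coeff (g : G)) :
    T 1 = 1 ∧
    ∀ a ∈ Subalgebra.center F (MonoidAlgebra F G),
      ∀ b ∈ Subalgebra.center F (MonoidAlgebra F G),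
        T a ∈ Subalgebra.center F (MonoidAlgebra F (Subgroup.centralizer ({x} : Set G))) ∧
        T (a + b) = T a + T b ∧
        T (a * b) = T a * T b ∧
        ∀ c : F, T (c • a) = c • T a := by
  classical
  -- conjugation invariance of central elements
  have hconj : ∀ a ∈ Subalgebra.center F (MonoidAlgebra F G), ∀ g u : G,
      a.coeff (g * u * g⁻¹) = a.coeff u := by
    intro a ha g u
    have h := (Subalgebra.mem_center_iff.mp ha) (MonoidAlgebra.single g 1)
    have h2 := congrArg (fun f : MonoidAlgebra F G => f.coeff (g * u)) h
    rw [MonoidAlgebra.coeff_single_mul_apply, MonoidAlgebra.coeff_mul_single_apply,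
      inv_mul_cancel_left, one_mul, mul_one] at h2
    exact h2.symm
  constructor
  · ext g
    rw [hT]
    simp only [MonoidAlgebra.one_def, MonoidAlgebra.coeff_single, Finsupp.single_apply]
    have hiff : (1 : G) = (g : G) ↔ (1 : Subgroup.centralizer ({x} : Set G)) = g := by
      constructor
      · intro h; exact Subtype.ext h
      · intro h; exact congrArg Subtype.val h
    split_ifs with h1 h2 h2 <;> first | rfl | (exact absurd (hiff.mp h1) h2) |
      (exact absurd (hiff.mpr h2) h1)
  intro a ha b hb
  refine ⟨?_, ?_, ?_, ?_⟩
  · -- centrality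
    rw [Subalgebra.mem_center_iff]
    intro b'
    ext y
    rw [MonoidAlgebra.coeff_mul_apply_left, MonoidAlgebra.coeff_mul_apply_right]
    refine Finsupp.sum_congr fun z _ => ?_
    rw [hT, hT, mul_comm]
    congr 1
    have h3 := hconj a ha ((z : G))⁻¹ ((y : G) * (z : G)⁻¹)
    have e : ((z : G))⁻¹ * ((y : G) * (z : G)⁻¹) * (((z : G))⁻¹)⁻¹ = (z : G)⁻¹ * y := by
      group
    rw [e] at h3
    push_cast
    exact h3
  · ext g
    rw [show (T (a + b)).coeff g = (a + b).coeff (g : G) from hT _ g,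
      show (T a + T b).coeff g = (T a).coeff g + (T b).coeff g from rfl, hT, hT]
    rfl
  · -- multiplicativity
    obtain ⟨k, hk⟩ := hx
    have hPp : IsPGroup p (Subgroup.zpowers (ConjAct.toConjAct x)) := by
      apply IsPGroup.of_card
      rw [Nat.card_zpowers, MulEquiv.orderOf_eq, hk]
    have hxH : ∀ (n : ℤ) (u : G), x ^ n * u * (x ^ n)⁻¹ ∈ Subgroup.centralizer ({x} : Set G)
        ↔ u ∈ Subgroup.centralizer ({x} : Set G) := by
      have key : ∀ y u : G, Commute x y → u ∈ Subgroup.centralizer ({x} : Set G) →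
          y * u * y⁻¹ ∈ Subgroup.centralizer ({x} : Set G) := by
        intro y u hxy hu
        rw [Subgroup.mem_centralizer_singleton_iff] at hu ⊢
        have hcx : Commute x u := hu.symm
        exact ((hxy.mul_right hcx).mul_right hxy.inv_right).symm
      intro n u
      constructor
      · intro h
        have h4 := key (x ^ n)⁻¹ _ ((Commute.refl x).zpow_right n).inv_right h
        simpa [mul_assoc] using h4
      · exact key (x ^ n) u ((Commute.refl x).zpow_right n)
    ext g
    rw [hT, MonoidAlgebra.coeff_mul_apply_left, MonoidAlgebra.coeff_mul_apply_left,
      Finsupp.sum_fintype, Finsupp.sum_fintype]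
    rotate_left
    all_goals try intro _; exact zero_mul _
    have hRHS : (∑ h : Subgroup.centralizer ({x} : Set G), (T a).coeff h * (T b).coeff (h⁻¹ * g)) =
        ∑ h : Subgroup.centralizer ({x} : Set G), a.coeff (h : G) * b.coeff ((h : G)⁻¹ * (g : G)) := by
      refine Finset.sum_congr rfl fun h _ => ?_
      rw [hT, hT]
      push_cast
      rfl
    rw [hRHS]
    have hsplit : ∀ u : G, a.coeff u * b.coeff (u⁻¹ * (g : G)) =
        (if u ∈ Subgroup.centralizer ({x} : Set G) then a.coeff u * b.coeff (u⁻¹ * (g : G)) else 0) +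
        (if u ∈ Subgroup.centralizer ({x} : Set G) then 0 else a.coeff u * b.coeff (u⁻¹ * (g : G))) := by
      intro u; split_ifs <;> simp
    rw [Finset.sum_congr rfl fun u _ => hsplit u, Finset.sum_add_distrib]
    have h2 : (∑ u : G, if u ∈ Subgroup.centralizer ({x} : Set G) then 0
        else a.coeff u * b.coeff (u⁻¹ * (g : G))) = 0 := by
      apply pgroup_sum_eq_zero (P := Subgroup.zpowers (ConjAct.toConjAct x)) hPp
      · -- invariance
        rintro ⟨c, hc⟩ u
        obtain ⟨n, rfl⟩ := Subgroup.mem_zpowers_iff.mp hc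
        have hsmul : (⟨ConjAct.toConjAct x ^ n, hc⟩ :
            Subgroup.zpowers (ConjAct.toConjAct x)) • u = x ^ n * u * (x ^ n)⁻¹ := by
          show (ConjAct.toConjAct x ^ n) • u = _
          rw [← map_zpow, ConjAct.toConjAct_smul]
        rw [hsmul]
        have hmem := hxH n u
        by_cases hu : u ∈ Subgroup.centralizer ({x} : Set G)
        · rw [if_pos hu, if_pos (hmem.mpr hu)]
        · rw [if_neg hu, if_neg (fun h => hu (hmem.mp h))]
          have hgx : (g : G) * x = x * (g : G) :=
            Subgroup.mem_centralizer_singleton_iff.mp g.2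
          have hcomm : Commute (g : G) (x ^ n) :=
            (show Commute (g : G) x from hgx).zpow_right n
          have e1 : (x ^ n * u * (x ^ n)⁻¹)⁻¹ * (g : G) =
              x ^ n * (u⁻¹ * (g : G)) * (x ^ n)⁻¹ := by
            have hc2 : (x ^ n)⁻¹ * (g : G) = (g : G) * (x ^ n)⁻¹ :=
              (hcomm.symm.inv_left).eq
            have h6 : (x ^ n * u * (x ^ n)⁻¹)⁻¹ * (g : G) =
                x ^ n * u⁻¹ * ((x ^ n)⁻¹ * (g : G)) := by group
            have h7 : x ^ n * (u⁻¹ * (g : G)) * (x ^ n)⁻¹ =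
                x ^ n * u⁻¹ * ((g : G) * (x ^ n)⁻¹) := by group
            rw [h6, h7, hc2]
          rw [e1, hconj a ha, hconj b hb]
      · -- vanishing on fixed points
        intro u hu
        have h5 := hu (⟨ConjAct.toConjAct x, Subgroup.mem_zpowers _⟩ :
          Subgroup.zpowers (ConjAct.toConjAct x))
        have hfix : x * u * x⁻¹ = u := by
          rw [← ConjAct.toConjAct_smul]
          exact h5
        have hmem : u ∈ Subgroup.centralizer ({x} : Set G) := by
          rw [Subgroup.mem_centralizer_singleton_iff]
          conv_lhs => rw [← hfix]
          group
        rw [if_pos hmem]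
    rw [h2, add_zero, ← Finset.sum_filter]
    exact Finset.sum_subtype _ (fun u => by simp) _
  · intro c; ext g
    rw [show (T (c • a)).coeff g = (c • a).coeff (g : G) from hT _ g,
      show (c • T a).coeff g = c • ((T a).coeff g) from rfl, hT]
    rfl
end

section
/- Let F be a field of characteristic p, G a finite group, x ∈ G of p-power order q, and y ∈ C_G(x) a p-regular element. Suppose a ∈ Z(F[G]) and the truncation σ_x(a) = Σ_{g ∈ C_G(x)} a_g g satisfies x·σ_x(a) = σ_x(a) in F[C_G(x)]. Then a_{xy} = a_y. -/
/-- If `a` is central in `F[G]`, `x` has `p`-power order, `y` is a `p`-regular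
element of `C_G(x)`, and left multiplication by `x` fixes the truncation
`σ_x(a) = T a`, then the coefficients of `a` at `x*y` and `y` agree. -/
theorem stmt16 (F : Type*) [Field F] (p : ℕ) [Fact p.Prime] [CharP F p]
    (G : Type*) [Group G] [Fintype G] (x : G) (hx : ∃ k : ℕ, orderOf x = p ^ k)
    (hxc : x ∈ Subgroup.centralizer ({x} : Set G))
    (y : G) (hy : y ∈ Subgroup.centralizer ({x} : Set G))
    (hyreg : ¬ p ∣ orderOf y)
    (T : MonoidAlgebra F G → MonoidAlgebra F (Subgroup.centralizer ({x} : Set G)))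
    (hT : ∀ (a : MonoidAlgebra F G) (g : Subgroup.centralizer ({x} : Set G)),
      (T a).coeff g = a.coeff (g : G))
    (a : MonoidAlgebra F G) (ha : a ∈ Subalgebra.center F (MonoidAlgebra F G))
    (hfix : MonoidAlgebra.of F (Subgroup.centralizer ({x} : Set G)) ⟨x, hxc⟩ * T a = T a) :
    a.coeff (x * y) = a.coeff y := by
  have hm : x * y ∈ Subgroup.centralizer ({x} : Set G) := mul_mem hxc hy
  have h := congrArg (fun f : MonoidAlgebra F (Subgroup.centralizer ({x} : Set G)) =>
    f.coeff ⟨x * y, hm⟩) hfix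
  simp only [MonoidAlgebra.of_apply, MonoidAlgebra.coeff_single_mul_apply, one_mul] at h
  have hinv : (⟨x, hxc⟩ : Subgroup.centralizer ({x} : Set G))⁻¹ * ⟨x * y, hm⟩
      = ⟨y, hy⟩ := by
    ext
    simp [inv_mul_cancel_left]
  rw [hinv, hT, hT] at h
  exact h.symm
end
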